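/- Let (X,d) be a complete, normal, regular semi-metric space with a graph-directed system: vertices V = {1,…,q}, finite edge sets E_{i,j}, each vertex having at least one outgoing edge, and for each edge e a right-continuous comparison function φ_e and a φ_e-contraction f_e. Define T(H₁,…,H_q) := (∪_j ∪_{e ∈ E_{i,j}} f_e(H_j))_{i=1}^q on q-tuples of non-empty subsets. If H = (H₁,…,H_q) is a tuple of non-empty bounded subsets with T(H) = H, then χ(Hᵢ) = 0 for every i, i.e., each Hᵢ is totally bounded. -/

import Mathlib

open Filter Topology Set

noncomputable section

/-- A semi-metric: symmetric, vanishing exactly on the diagonal (no triangle inequality). -/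
def IsSemiMetric {X : Type*} (d : X → X → NNReal) : Prop :=
  (∀ x y, d x y = d y x) ∧ ∀ x y, d x y = 0 ↔ x = y

/-- Ball of radius `r` around `x`. -/
def SMBall {X : Type*} (d : X → X → NNReal) (x : X) (r : NNReal) : Set X := {y | d x y < r}

/-- The basic triangle function `Φ_d(u,v) = sup{d(x,y) : ∃ z, d(x,z) ≤ u, d(y,z) ≤ v}`. -/
def SMPhi {X : Type*} (d : X → X → NNReal) (u v : NNReal) : ENNReal :=
  ⨆ (p : X × X) (_ : ∃ z : X, d p.1 z ≤ u ∧ d p.2 z ≤ v), (d p.1 p.2 : ENNReal)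

/-- Normal property: the basic triangle function is finite-valued. -/
def SMNormal {X : Type*} (d : X → X → NNReal) : Prop := ∀ u v : NNReal, SMPhi d u v < ⊤

/-- Regular property: the basic triangle function is continuous at `(0,0)`. -/
def SMRegular {X : Type*} (d : X → X → NNReal) : Prop :=
  ∀ ε : NNReal, 0 < ε → ∃ δ : NNReal, 0 < δ ∧
    ∀ u v : NNReal, u ≤ δ → v ≤ δ → SMPhi d u v < (ε : ENNReal)

/-- Cauchy sequence with respect to a semi- or pre-metric. -/
def SMCauchy {X : Type*} (d : X → X → NNReal) (x : ℕ → X) : Prop :=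
  ∀ ε : NNReal, 0 < ε → ∃ N : ℕ, ∀ m ≥ N, ∀ n ≥ N, d (x m) (x n) < ε

/-- Completeness: every Cauchy sequence converges. -/
def SMComplete {X : Type*} (d : X → X → NNReal) : Prop :=
  ∀ x : ℕ → X, SMCauchy d x → ∃ l : X, Tendsto (fun n => d (x n) l) atTop (𝓝 0)

/-- Boundedness: contained in some ball. -/
def SMBounded {X : Type*} (d : X → X → NNReal) (H : Set X) : Prop :=
  ∃ (x₀ : X) (r : NNReal), H ⊆ SMBall d x₀ r

/-- Comparison function: increasing, with iterates tending to zero on `(0,∞)`. -/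
def SMComparison (φ : NNReal → NNReal) : Prop :=
  Monotone φ ∧ ∀ t : NNReal, 0 < t → Tendsto (fun n => φ^[n] t) atTop (𝓝 0)

/-- Right-continuity of a function `[0,∞) → [0,∞)`. -/
def SMRightCont (φ : NNReal → NNReal) : Prop :=
  ∀ t : NNReal, ContinuousWithinAt φ (Ici t) t

/-- Diameter of a set. -/
def SMdiam {X : Type*} (d : X → X → NNReal) (H : Set X) : ENNReal :=
  ⨆ (x ∈ H) (y ∈ H), (d x y : ENNReal)

/-- `r`-neighborhood of a set. -/
def SMnbhd {X : Type*} (d : X → X → NNReal) (A : Set X) (r : NNReal) : Set X :=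
  ⋃ x ∈ A, SMBall d x r

/-- Kuratowski measure of non-compactness. -/
def SMchi {X : Type*} (d : X → X → NNReal) (H : Set X) : ENNReal :=
  sInf {c : ENNReal | ∃ r : NNReal, c = (r : ENNReal) ∧ 0 < r ∧
    ∃ s : Finset X, H ⊆ ⋃ x ∈ s, SMBall d x r}

/-- Hausdorff-Pompeiu distance between subsets. -/
def SMdHP {X : Type*} (d : X → X → NNReal) (A B : Set X) : ENNReal :=
  sInf {c : ENNReal | ∃ r : NNReal, c = (r : ENNReal) ∧ 0 < r ∧
    A ⊆ SMnbhd d B r ∧ B ⊆ SMnbhd d A r}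

/-- Open sets of the semi-metric topology. -/
def SMOpen {X : Type*} (d : X → X → NNReal) (U : Set X) : Prop :=
  ∀ x ∈ U, ∃ r : NNReal, 0 < r ∧ SMBall d x r ⊆ U

/-- Closed sets of the semi-metric topology. -/
def SMClosed {X : Type*} (d : X → X → NNReal) (A : Set X) : Prop := SMOpen d Aᶜ

/-- Max semi-metric on `X^q`. -/
def SMmax {X : Type*} (q : ℕ) (d : X → X → NNReal) (x y : Fin q → X) : NNReal :=
  Finset.univ.sup fun i => d (x i) (y i)


lemma smchi_le {X : Type*} (d : X → X → NNReal) (H : Set X) (r : NNReal) (hr : 0 < r)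
    (s : Finset X) (hs : H ⊆ ⋃ x ∈ s, SMBall d x r) : SMchi d H ≤ (r : ENNReal) :=
  sInf_le ⟨r, rfl, hr, s, hs⟩

lemma smchi_cover {X : Type*} (d : X → X → NNReal) (H : Set X) (r : NNReal)
    (h : SMchi d H < (r : ENNReal)) : ∃ s : Finset X, H ⊆ ⋃ x ∈ s, SMBall d x r := by
  obtain ⟨c, hc, hcr⟩ := sInf_lt_iff.mp h
  obtain ⟨r₀, rfl, hr₀, s, hs⟩ := hc
  refine ⟨s, hs.trans ?_⟩
  have hlt : r₀ ≤ r := le_of_lt (by exact_mod_cast hcr)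
  refine Set.iUnion₂_mono fun x _ y hy => ?_
  exact lt_of_lt_of_le hy hlt

lemma comparison_lt {φ : NNReal → NNReal} (hφ : SMComparison φ) {t : NNReal} (ht : 0 < t) :
    φ t < t := by
  by_contra h
  push_neg at h
  have hiter : ∀ n, t ≤ φ^[n] t := by
    intro n
    induction n with
    | zero => simp
    | succ n ih =>
      rw [Function.iterate_succ_apply']
      exact le_trans h (hφ.1 ih)
  have := (hφ.2 t ht).eventually_lt_const ht
  obtain ⟨n, hn⟩ := this.exists
  exact absurd (hiter n) (not_le.mpr hn)

lemma le_coe_of_forall_lt {a : ENNReal} {b : NNReal}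
    (h : ∀ t : NNReal, b < t → a ≤ (t : ENNReal)) : a ≤ (b : ENNReal) := by
  by_contra h'
  push_neg at h'
  obtain ⟨t, hbt, hta⟩ := ENNReal.lt_iff_exists_nnreal_btwn.mp h'
  exact absurd (h t (by exact_mod_cast hbt)) (not_le.mpr hta)

theorem stmt15 {X : Type*} (d : X → X → NNReal) (hd : IsSemiMetric d)
    (hnorm : SMNormal d) (hreg : SMRegular d) (hc : SMComplete d)
    {q : ℕ} (E : Type*) [Fintype E] (src tgt : E → Fin q)
    (hout : ∀ i : Fin q, ∃ e : E, src e = i)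
    (φ : E → NNReal → NNReal) (hφ : ∀ e, SMComparison (φ e) ∧ SMRightCont (φ e))
    (f : E → X → X) (hf : ∀ e x y, d (f e x) (f e y) ≤ φ e (d x y))
    (H : Fin q → Set X) (hne : ∀ i, (H i).Nonempty) (hb : ∀ i, SMBounded d (H i))
    (hinv : ∀ i, (⋃ (e : E) (_ : src e = i), f e '' H (tgt e)) = H i) :
    ∀ i, SMchi d (H i) = 0 := by
  classical
  set g : NNReal → NNReal := fun u => Finset.univ.sup fun e : E => φ e u with hg
  have hfin : ∀ i, SMchi d (H i) < ⊤ := by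
    intro i
    obtain ⟨x₀, r, hxr⟩ := hb i
    have hle := smchi_le d (H i) (r + 1) (by positivity) {x₀} (by
      intro y hy
      simp only [Finset.mem_singleton, Set.mem_iUnion]
      exact ⟨x₀, rfl, lt_of_lt_of_le (hxr hy) (self_le_add_right r 1)⟩)
    exact lt_of_le_of_lt hle (by simp)
  set c : ENNReal := Finset.univ.sup fun i => SMchi d (H i) with hcdef
  have hcfin : c < ⊤ := by
    rw [hcdef, Finset.sup_lt_iff (by simp : (⊥ : ENNReal) < ⊤)]
    exact fun i _ => hfin i
  set c₀ : NNReal := c.toNNReal with hc₀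
  have hcc : c = (c₀ : ENNReal) := (ENNReal.coe_toNNReal hcfin.ne).symm
  have hchile : ∀ i, SMchi d (H i) ≤ c := by
    intro i; rw [hcdef]; exact Finset.le_sup (f := fun j => SMchi d (H j)) (Finset.mem_univ i)
  have hkey : ∀ r : NNReal, c₀ < r → (c₀ : ENNReal) ≤ (g r : ENNReal) := by
    intro r hr
    have hcov : ∀ j : Fin q, ∃ s : Finset X, H j ⊆ ⋃ x ∈ s, SMBall d x r := by
      intro j
      refine smchi_cover d (H j) r (lt_of_le_of_lt (hchile j) ?_)
      rw [hcc]; exact_mod_cast hr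
    choose s hs using hcov
    have hchig : ∀ i, SMchi d (H i) ≤ (g r : ENNReal) := by
      intro i
      apply le_coe_of_forall_lt
      intro t hgt
      have ht : 0 < t := lt_of_le_of_lt (zero_le ..) hgt
      refine smchi_le d (H i) t ht
        (Finset.univ.biUnion fun e : E => (s (tgt e)).image (f e)) ?_
      intro y hy
      rw [← hinv i] at hy
      simp only [Set.mem_iUnion, Set.mem_image] at hy
      obtain ⟨e, hsrc, z, hz, rfl⟩ := hy
      obtain ⟨x, hx⟩ := Set.mem_iUnion₂.mp (hs (tgt e) hz)
      obtain ⟨hxs, hxz⟩ := hx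
      refine Set.mem_iUnion₂.mpr ⟨f e x, ?_, ?_⟩
      · simp only [Finset.mem_biUnion, Finset.mem_image]
        exact ⟨e, Finset.mem_univ e, x, hxs, rfl⟩
      · have h1 : d (f e x) (f e z) ≤ φ e (d x z) := hf e x z
        have h2 : φ e (d x z) ≤ φ e r := (hφ e).1.1 (le_of_lt hxz)
        have h3 : φ e r ≤ g r := by
          rw [hg]
          exact Finset.le_sup (f := fun e' => φ e' r) (Finset.mem_univ e)
        exact lt_of_le_of_lt (h1.trans (h2.trans h3)) hgt
    rw [← hcc, hcdef, Finset.sup_le_iff]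
    exact fun i _ => hchig i
  have hgcont : ContinuousWithinAt g (Set.Ici c₀) c₀ := by
    rw [hg]
    induction (Finset.univ : Finset E) using Finset.cons_induction with
    | empty => simpa using continuousWithinAt_const
    | cons a u ha ih =>
      simp only [Finset.sup_cons]
      exact ((hφ a).2 c₀).sup ih
  have htend : Filter.Tendsto g (𝓝[>] c₀) (𝓝 (g c₀)) :=
    hgcont.mono Set.Ioi_subset_Ici_self
  have hle : c₀ ≤ g c₀ := by
    refine ge_of_tendsto htend (eventually_mem_nhdsWithin.mono fun r hr => ?_)
    exact_mod_cast hkey r hr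
  have hc₀0 : c₀ = 0 := by
    by_contra h0
    have hpos : 0 < c₀ := pos_iff_ne_zero.mpr h0
    have : g c₀ < c₀ := by
      rw [hg]
      rw [Finset.sup_lt_iff (by exact_mod_cast hpos : (⊥ : NNReal) < c₀)]
      exact fun e _ => comparison_lt (hφ e).1 hpos
    exact absurd hle (not_le.mpr this)
  intro i
  have := hchile i
  rw [hcc, hc₀0] at this
  simpa using this
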